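/- The filter F_ω on Path(E) generated by the sets U_n = {u ∈ Path(E) : |u| > n}, n ∈ ℕ, is a topological filter, provided the path lengths in E are unbounded (so that each U_n is nonempty); consequently (G(E), τ_{F_ω}) is a topological inverse semigroup. -/

import Mathlib

universe u

/-- A directed graph. -/
structure DiGraph : Type (u + 1) where
  V : Type u
  E : Type u
  s : E → V
  r : E → V

namespace DiGraph

variable (G : DiGraph.{u})

/-- A list of edges forms a valid path starting at vertex `v`. -/
def Valid (v : G.V) : List G.E → Prop
  | [] => True
  | e :: l => G.s e = v ∧ Valid (G.r e) l

/-- the endpoint of a list of edges starting at `v`. -/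
def dst (v : G.V) : List G.E → G.V
  | [] => v
  | e :: l => dst (G.r e) l

variable {G}

lemma dst_append (v : G.V) (l₁ l₂ : List G.E) :
    G.dst v (l₁ ++ l₂) = G.dst (G.dst v l₁) l₂ := by
  induction l₁ generalizing v with
  | nil => rfl
  | cons e t ih => simp [dst, ih]

lemma valid_append (v : G.V) (l₁ l₂ : List G.E) :
    G.Valid v (l₁ ++ l₂) ↔ G.Valid v l₁ ∧ G.Valid (G.dst v l₁) l₂ := by
  induction l₁ generalizing v with
  | nil => simp [Valid, dst]
  | cons e t ih => simp [Valid, dst, ih, and_assoc]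

variable (G) in
/-- A (finite, directed) path in `G`: a source vertex together with a
composable list of edges.  Paths of length zero are the vertices. -/
structure GPath : Type u where
  src : G.V
  edges : List G.E
  valid : G.Valid src edges

/-- The range (end vertex) of a path. -/
def GPath.rng (p : G.GPath) : G.V := G.dst p.src p.edges

/-- Concatenation of composable paths. -/
def GPath.comp (p q : G.GPath) (h : p.rng = q.src) : G.GPath :=
  ⟨p.src, p.edges ++ q.edges, by
    rw [valid_append]
    exact ⟨p.valid, by rw [show G.dst p.src p.edges = q.src from h]; exact q.valid⟩⟩

lemma GPath.comp_rng (p q : G.GPath) (h : p.rng = q.src) : (p.comp q h).rng = q.rng := by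
  show G.dst p.src (p.edges ++ q.edges) = _
  rw [dst_append, show G.dst p.src p.edges = q.src from h]; rfl

/-- If `p` is a prefix of the path `q`, the remaining path (so that
`q = p.comp (p.strip q _ _)`). -/
def GPath.strip (p q : G.GPath) (hs : p.src = q.src) (hp : p.edges <+: q.edges) : G.GPath :=
  ⟨p.rng, q.edges.drop p.edges.length, by
    obtain ⟨t, ht⟩ := hp
    have h1 : p.edges ++ q.edges.drop p.edges.length = q.edges := by
      rw [← ht, List.drop_left]
    have h2 : G.Valid p.src (p.edges ++ q.edges.drop p.edges.length) := by
      rw [h1, hs]; exact q.valid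
    exact ((valid_append _ _ _).mp h2).2⟩

lemma GPath.strip_rng (p q : G.GPath) (hs : p.src = q.src) (hp : p.edges <+: q.edges) :
    (p.strip q hs hp).rng = q.rng := by
  show G.dst p.rng (q.edges.drop p.edges.length) = G.dst q.src q.edges
  obtain ⟨t, ht⟩ := hp
  have h1 : p.edges ++ q.edges.drop p.edges.length = q.edges := by
    rw [← ht, List.drop_left]
  conv_rhs => rw [← hs, ← h1]
  rw [dst_append]; rfl

variable (G) in
/-- A nonzero element `a b⁻¹` of the graph inverse semigroup: a pair of
paths with the same range. -/
structure NZ : Type u where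
  a : G.GPath
  b : G.GPath
  h : a.rng = b.rng

/-- The graph inverse semigroup `G(E)` over a directed graph, in normal form:
the elements `a b⁻¹` with `r(a) = r(b)`, together with a zero element. -/
def GIS (G : DiGraph.{u}) : Type u := Option (NZ G)

instance : Zero (GIS G) := ⟨none⟩

open scoped Classical in
/-- The multiplication of the graph inverse semigroup:
`a b⁻¹ · c d⁻¹ = a c₁ d⁻¹` if `c = b c₁`, `a (d b₁)⁻¹` if `b = c b₁`, and `0` otherwise. -/
noncomputable instance : Mul (GIS G) :=
  ⟨fun x y =>
    match x, y with
    | none, _ => none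
    | some _, none => none
    | some ⟨a, b, hab⟩, some ⟨c, d, hcd⟩ =>
      if h : b.src = c.src ∧ b.edges <+: c.edges then
        some ⟨a.comp (b.strip c h.1 h.2) hab, d, by
          first
          | exact (GPath.comp_rng _ _ _).trans ((GPath.strip_rng _ _ _ _).trans hcd)
          | (erw [GPath.comp_rng, GPath.strip_rng]; exact hcd)⟩
      else if h' : c.src = b.src ∧ c.edges <+: b.edges then
        some ⟨a, d.comp (c.strip b h'.1 h'.2) hcd.symm, by
          first
          | exact hab.trans ((GPath.comp_rng _ _ _).trans (GPath.strip_rng _ _ _ _)).symm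
          | (erw [GPath.comp_rng, GPath.strip_rng]; exact hab)⟩
      else none⟩

/-- The nonzero element `a b⁻¹` of `G(E)` determined by a pair of paths
with the same range. -/
def GIS.nz (n : NZ G) : GIS G := some n

/-- The inversion of the graph inverse semigroup: `(u v⁻¹)⁻¹ = v u⁻¹`. -/
def GIS.inv : GIS G → GIS G
  | none => none
  | some ⟨a, b, h⟩ => some ⟨b, a, h.symm⟩

end DiGraph
namespace DiGraph

variable {G : DiGraph.{u}}

/-- membership predicate for the basic neighbourhoods of zero: all of
`a b⁻¹` with `a, b ∈ F`, together with `0`. -/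
def inUF (F : Set G.GPath) : GIS G → Prop
  | none => True
  | some n => n.a ∈ F ∧ n.b ∈ F

/-- The basic neighbourhood `U_F(0) = {a b⁻¹ : a, b ∈ F} ∪ {0}` of zero. -/
def UF (F : Set G.GPath) : Set (GIS G) := {x | inUF F x}

lemma inUF_mono {F₁ F₂ : Set G.GPath} (h : F₁ ⊆ F₂) :
    ∀ x : GIS G, inUF F₁ x → inUF F₂ x := by
  intro x hx
  cases x with
  | none => trivial
  | some n => exact ⟨h hx.1, h hx.2⟩

/-- The topology `τ_𝓕` on `G(E)` determined by a filter `𝓕` on `Path(E)`: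
every nonzero element is isolated, and the sets `U_F(0)`, `F ∈ 𝓕`, form a
neighbourhood base at `0`. -/
def tauF (𝓕 : Filter G.GPath) : TopologicalSpace (GIS G) where
  IsOpen U := (0 : GIS G) ∈ U → ∃ F ∈ 𝓕, UF F ⊆ U
  isOpen_univ := fun _ => ⟨Set.univ, Filter.univ_mem, Set.subset_univ _⟩
  isOpen_inter := fun U V hU hV h0 => by
    obtain ⟨F₁, hF₁, hs₁⟩ := hU h0.1
    obtain ⟨F₂, hF₂, hs₂⟩ := hV h0.2
    exact ⟨F₁ ∩ F₂, Filter.inter_mem hF₁ hF₂, fun x hx =>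
      ⟨hs₁ (inUF_mono Set.inter_subset_left x hx),
       hs₂ (inUF_mono Set.inter_subset_right x hx)⟩⟩
  isOpen_sUnion := fun S hS h0 => by
    obtain ⟨U, hU, h0U⟩ := h0
    obtain ⟨F, hF, hs⟩ := hS U hU h0U
    exact ⟨F, hF, hs.trans (Set.subset_sUnion_of_mem hU)⟩

/-- The prefix partial order on paths: `a ≤ b` iff `b` is a prefix of `a`. -/
def prefLE (a b : G.GPath) : Prop := b.src = a.src ∧ b.edges <+: a.edges

/-- An ideal of `(Path(E), ≤)`: a set `A` with `↓A = A`. -/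
def IsIdeal (A : Set G.GPath) : Prop :=
  ∀ a b : G.GPath, prefLE a b → b ∈ A → a ∈ A

/-- A topological filter on `Path(E)`:
(i) for `F ∈ 𝓕` and paths `a, b` with `r(a) = r(b)`, the set
`F \ {bk : k ∈ Path(E), ak ∉ F}` belongs to `𝓕`;
(ii) `𝓕` contains all cofinite subsets of `Path(E)`;
(iii) `𝓕` has a base consisting of ideals of `(Path(E), ≤)`. -/
def IsTopFilter (𝓕 : Filter G.GPath) : Prop :=
  (∀ F ∈ 𝓕, ∀ a b : G.GPath, a.rng = b.rng →
      F \ {p | ∃ (k : G.GPath) (h1 : b.rng = k.src) (h2 : a.rng = k.src),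
        p = b.comp k h1 ∧ a.comp k h2 ∉ F} ∈ 𝓕) ∧
  𝓕 ≤ Filter.cofinite ∧
  (∀ F ∈ 𝓕, ∃ I ∈ 𝓕, I ⊆ F ∧ IsIdeal I)

variable (G) in
/-- The filter `𝓕_ω` generated by the sets `U_n = {u ∈ Path(E) : |u| > n}`. -/
def Fomega : Filter G.GPath :=
  Filter.generate {S | ∃ n : ℕ, S = {u : G.GPath | n < u.edges.length}}

variable (G) in
/-- `U_n(0) = {u v⁻¹ : min{|u|,|v|} > n} ∪ {0}`. -/
def Un (n : ℕ) : Set (GIS G) := UF {u : G.GPath | n < u.edges.length}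


lemma basic_mem_Fomega (n : ℕ) : {u : G.GPath | n < u.edges.length} ∈ Fomega G :=
  Filter.mem_generate_of_mem ⟨n, rfl⟩

lemma mem_Fomega_iff {F : Set G.GPath} :
    F ∈ Fomega G ↔ ∃ n : ℕ, {u : G.GPath | n < u.edges.length} ⊆ F := by
  constructor
  · intro h
    rw [Fomega, Filter.mem_generate_iff] at h
    obtain ⟨t, hts, htf, hsub⟩ := h
    suffices h : ∃ n, {u : G.GPath | n < u.edges.length} ⊆ ⋂₀ t by
      exact h.imp fun n hn => hn.trans hsub
    clear hsub
    refine Set.Finite.induction_on (motive := fun t _ => t ⊆ {S | ∃ n : ℕ, S = {u : G.GPath | n < u.edges.length}} → ∃ n, {u : G.GPath | n < u.edges.length} ⊆ ⋂₀ t) t htf (fun _ => ⟨0, by simp⟩) ?_ hts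
    intro S t hSt htf ih hsub'
    obtain ⟨m, hm⟩ := ih fun x hx => hsub' (Set.mem_insert_of_mem _ hx)
    obtain ⟨k, hk⟩ := hsub' (Set.mem_insert S t)
    refine ⟨max m k, fun u hu => ?_⟩
    rw [Set.sInter_insert]
    exact ⟨hk ▸ (lt_of_le_of_lt (le_max_right m k) hu : k < u.edges.length),
      hm (lt_of_le_of_lt (le_max_left m k) hu)⟩
  · rintro ⟨n, hn⟩
    exact Filter.mem_of_superset (basic_mem_Fomega n) hn

lemma mul_len {n₁ n₂ n₃ : NZ G}
    (h : GIS.nz n₁ * GIS.nz n₂ = GIS.nz n₃) :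
    n₁.a.edges.length ≤ n₃.a.edges.length ∧
    n₂.a.edges.length ≤ n₃.a.edges.length + n₁.b.edges.length ∧
    n₂.b.edges.length ≤ n₃.b.edges.length ∧
    n₁.b.edges.length ≤ n₃.b.edges.length + n₂.a.edges.length := by
  obtain ⟨a, b, hab⟩ := n₁
  obtain ⟨c, d, hcd⟩ := n₂
  dsimp only [GIS.nz, HMul.hMul, Mul.mul] at h
  split_ifs at h with h1 h2
  · obtain rfl := Option.some.inj ((dif_pos h1).symm.trans h)
    have := h1.2.length_le
    simp only [GPath.comp, GPath.strip, List.length_append, List.length_drop]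
    omega
  · by_cases h2 : c.src = b.src ∧ c.edges <+: b.edges
    swap
    · erw [dif_neg h1, dif_neg h2] at h
      exact absurd h (Option.some_ne_none n₃).symm
    erw [dif_neg h1, dif_pos h2] at h
    obtain rfl := Option.some.inj h
    have := h2.2.length_le
    simp only [GPath.comp, GPath.strip, List.length_append, List.length_drop]
    omega

end DiGraph

namespace DiGraph
variable {G : DiGraph.{u}}

lemma GIS.zero_or_nz (x : GIS G) : x = 0 ∨ ∃ n : NZ G, x = GIS.nz n :=
  Option.casesOn x (Or.inl rfl) fun n => Or.inr ⟨n, rfl⟩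

lemma zero_mul' (y : GIS G) : (0 : GIS G) * y = 0 := rfl

lemma mul_zero' (x : GIS G) : x * (0 : GIS G) = 0 := by
  rcases GIS.zero_or_nz x with rfl | ⟨n, rfl⟩ <;> rfl

lemma zero_mem_UF (F : Set G.GPath) : (0 : GIS G) ∈ UF F := trivial

lemma isOpen_UF {𝓕 : Filter G.GPath} {F : Set G.GPath} (hF : F ∈ 𝓕) :
    @IsOpen (GIS G) (tauF 𝓕) (UF F) := fun _ => ⟨F, hF, subset_rfl⟩

lemma isOpen_singleton_nz (𝓕 : Filter G.GPath) (n : NZ G) :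
    @IsOpen (GIS G) (tauF 𝓕) {GIS.nz n} := fun h => (Option.some_ne_none n (show (none : Option (NZ G)) = some n from h).symm).elim

lemma nz_mem_Un {n : ℕ} {m : NZ G} :
    GIS.nz m ∈ Un G n ↔ n < m.a.edges.length ∧ n < m.b.edges.length := Iff.rfl

lemma mul_mem_Un_A {n : ℕ} (p q : GIS G) (hp : p ∈ Un G n) (hq : q ∈ Un G n) :
    p * q ∈ Un G n := by
  rcases GIS.zero_or_nz p with rfl | ⟨m₁, rfl⟩
  · rw [zero_mul']; exact trivial
  rcases GIS.zero_or_nz q with rfl | ⟨m₂, rfl⟩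
  · rw [mul_zero']; exact trivial
  rw [nz_mem_Un] at hp hq
  cases h3 : GIS.nz m₁ * GIS.nz m₂ with
  | none => exact trivial
  | some n₃ =>

    have := mul_len h3
    exact ⟨(by omega : n < n₃.a.edges.length), (by omega : n < n₃.b.edges.length)⟩

lemma mul_mem_Un_B {n : ℕ} (p : GIS G) (n₂ : NZ G)
    (hp : p ∈ Un G (n + n₂.a.edges.length)) : p * GIS.nz n₂ ∈ Un G n := by
  rcases GIS.zero_or_nz p with rfl | ⟨m₁, rfl⟩
  · rw [zero_mul']; exact trivial
  rw [nz_mem_Un] at hp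
  cases h3 : GIS.nz m₁ * GIS.nz n₂ with
  | none => exact trivial
  | some n₃ =>

    have := mul_len h3
    exact ⟨(by omega : n < n₃.a.edges.length), (by omega : n < n₃.b.edges.length)⟩

lemma mul_mem_Un_C {n : ℕ} (n₁ : NZ G) (q : GIS G)
    (hq : q ∈ Un G (n + n₁.b.edges.length)) : GIS.nz n₁ * q ∈ Un G n := by
  rcases GIS.zero_or_nz q with rfl | ⟨m₂, rfl⟩
  · rw [mul_zero']; exact trivial
  rw [nz_mem_Un] at hq
  cases h3 : GIS.nz n₁ * GIS.nz m₂ with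
  | none => exact trivial
  | some n₃ =>

    have := mul_len h3
    exact ⟨(by omega : n < n₃.a.edges.length), (by omega : n < n₃.b.edges.length)⟩

end DiGraph


open DiGraph in
/-- The filter `𝓕_ω` on `Path(E)` generated by the sets
`U_n = {u ∈ Path(E) : |u| > n}` is a topological filter, provided the path
lengths in `E` are unbounded; consequently `(G(E), τ_{𝓕_ω})` is a (Hausdorff)
topological inverse semigroup. -/
theorem Fomega_topological (G : DiGraph.{u})
    (hlen : ∀ n : ℕ, ∃ u : G.GPath, n < u.edges.length) :
    IsTopFilter (Fomega G) ∧
    @T2Space (GIS G) (tauF (Fomega G)) ∧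
    @Continuous (GIS G × GIS G) (GIS G)
      (@instTopologicalSpaceProd _ _ (tauF (Fomega G)) (tauF (Fomega G)))
      (tauF (Fomega G)) (fun p => p.1 * p.2) ∧
    @Continuous (GIS G) (GIS G) (tauF (Fomega G)) (tauF (Fomega G)) GIS.inv := by
  letI : TopologicalSpace (GIS G) := tauF (Fomega G)
  refine ⟨⟨?_, ?_, ?_⟩, ?_, ?_, ?_⟩
  · intro F hF a b hab
    obtain ⟨n, hn⟩ := mem_Fomega_iff.mp hF
    refine mem_Fomega_iff.mpr ⟨n + b.edges.length, fun p hp => ?_⟩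
    simp only [Set.mem_setOf_eq] at hp
    refine ⟨hn (by simp only [Set.mem_setOf_eq]; omega), ?_⟩
    rintro ⟨k, h1, h2, rfl, hak⟩
    simp only [GPath.comp, List.length_append] at hp
    exact hak (hn (by simp only [Set.mem_setOf_eq, GPath.comp, List.length_append]; omega))
  · rw [Filter.le_cofinite_iff_compl_singleton_mem]
    intro x
    refine mem_Fomega_iff.mpr ⟨x.edges.length, fun u hu => ?_⟩
    simp only [Set.mem_setOf_eq] at hu
    intro hux
    rw [Set.mem_singleton_iff] at hux
    subst hux
    exact lt_irrefl _ hu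
  · intro F hF
    obtain ⟨n, hn⟩ := mem_Fomega_iff.mp hF
    refine ⟨_, basic_mem_Fomega n, hn, ?_⟩
    rintro a b ⟨hsrc, hpref⟩ hb
    exact lt_of_lt_of_le hb hpref.length_le
  · -- T2
    refine ⟨fun x y hxy => ?_⟩
    rcases GIS.zero_or_nz x with rfl | ⟨m, rfl⟩
    · rcases GIS.zero_or_nz y with rfl | ⟨n, rfl⟩
      · exact absurd rfl hxy
      · refine ⟨Un G (max n.a.edges.length n.b.edges.length), {GIS.nz n},
          isOpen_UF (basic_mem_Fomega _), isOpen_singleton_nz _ n, trivial, rfl, ?_⟩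
        rw [Set.disjoint_left]
        intro z hz h
        rw [Set.mem_singleton_iff] at h
        subst h
        rw [nz_mem_Un] at hz
        omega
    · rcases GIS.zero_or_nz y with rfl | ⟨n, rfl⟩
      · refine ⟨{GIS.nz m}, Un G (max m.a.edges.length m.b.edges.length),
          isOpen_singleton_nz _ m, isOpen_UF (basic_mem_Fomega _), rfl, trivial, ?_⟩
        rw [Set.disjoint_right]
        intro z hz h
        rw [Set.mem_singleton_iff] at h
        subst h
        rw [nz_mem_Un] at hz
        omega
      · refine ⟨{GIS.nz m}, {GIS.nz n}, isOpen_singleton_nz _ m,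
          isOpen_singleton_nz _ n, rfl, rfl, ?_⟩
        rw [Set.disjoint_left]
        intro z hz h
        rw [Set.mem_singleton_iff] at hz h
        subst hz
        exact hxy h
  · -- multiplication continuous
    rw [continuous_def]
    intro U hU
    rw [isOpen_prod_iff]
    intro x y hxy
    replace hxy : x * y ∈ U := hxy
    rcases GIS.zero_or_nz x with rfl | ⟨n₁, rfl⟩
    · rw [zero_mul'] at hxy
      obtain ⟨F, hF, hsub⟩ := hU hxy
      obtain ⟨n, hn⟩ := mem_Fomega_iff.mp hF
      have hUn : Un G n ⊆ U := fun z hz => hsub (inUF_mono hn z hz)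
      rcases GIS.zero_or_nz y with rfl | ⟨n₂, rfl⟩
      · refine ⟨Un G n, Un G n, isOpen_UF (basic_mem_Fomega _),
          isOpen_UF (basic_mem_Fomega _), trivial, trivial, ?_⟩
        rintro ⟨p, q⟩ ⟨hp, hq⟩
        exact hUn (mul_mem_Un_A p q hp hq)
      · refine ⟨Un G (n + n₂.a.edges.length), {GIS.nz n₂},
          isOpen_UF (basic_mem_Fomega _), isOpen_singleton_nz _ n₂, trivial, rfl, ?_⟩
        rintro ⟨p, q⟩ ⟨hp, hq⟩
        rw [Set.mem_singleton_iff] at hq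
        subst hq
        exact hUn (mul_mem_Un_B p n₂ hp)
    · rcases GIS.zero_or_nz y with rfl | ⟨n₂, rfl⟩
      · rw [mul_zero'] at hxy
        obtain ⟨F, hF, hsub⟩ := hU hxy
        obtain ⟨n, hn⟩ := mem_Fomega_iff.mp hF
        have hUn : Un G n ⊆ U := fun z hz => hsub (inUF_mono hn z hz)
        refine ⟨{GIS.nz n₁}, Un G (n + n₁.b.edges.length),
          isOpen_singleton_nz _ n₁, isOpen_UF (basic_mem_Fomega _), rfl, trivial, ?_⟩
        rintro ⟨p, q⟩ ⟨hp, hq⟩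
        rw [Set.mem_singleton_iff] at hp
        subst hp
        exact hUn (mul_mem_Un_C n₁ q hq)
      · refine ⟨{GIS.nz n₁}, {GIS.nz n₂}, isOpen_singleton_nz _ n₁,
          isOpen_singleton_nz _ n₂, rfl, rfl, ?_⟩
        rintro ⟨p, q⟩ ⟨hp, hq⟩
        rw [Set.mem_singleton_iff] at hp hq
        subst hp; subst hq
        exact hxy
  · -- inversion continuous
    rw [continuous_def]
    intro U hU h0
    obtain ⟨F, hF, hsub⟩ := hU h0
    refine ⟨F, hF, fun z hz => ?_⟩
    rcases GIS.zero_or_nz z with rfl | ⟨m, rfl⟩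
    · exact hsub (zero_mem_UF F)
    · obtain ⟨a, b, h⟩ := m
      exact hsub ⟨hz.2, hz.1⟩
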